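/- arXiv:1403.2572 — 3 statements merged into one kernel-verified Lean document; each statement's English description precedes it below -/
import Mathlib

section
/- Let P3 = P1 + P2 = (x3, y3) and P4 = P1 − P2 = (x4, y4), the sum and difference being taken in the group E(K̄). Then K(x1, x2, y1·y2) = K(x1, x2, x3, x4), and moreover K_m = K_{m,x}(y1). -/
/-- The short Weierstrass curve `y² = x³ + A·x + B` base-changed to `F`: its coefficients are
the images under `algebraMap K F` of `A, B ∈ K`. -/
def baseW (K F : Type*) [Field K] [Field F] [Algebra K F] (A B : K) :
    WeierstrassCurve.Affine F :=
  { a₁ := 0, a₂ := 0, a₃ := 0, a₄ := algebraMap K F A, a₆ := algebraMap K F B }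

open Classical in
/-- `K(E[m])`: the intermediate field of `F/K` generated by the coordinates of all `m`-torsion
points of the curve `W`. -/
noncomputable def torsionField (K : Type*) {F : Type*} [Field K] [Field F] [Algebra K F]
    (W : WeierstrassCurve.Affine F) (m : ℕ) : IntermediateField K F :=
  IntermediateField.adjoin K
    {c | ∃ (x y : F) (h : W.Nonsingular x y),
      m • (WeierstrassCurve.Affine.Point.some _ _ h : WeierstrassCurve.Affine.Point W) = 0 ∧
      (c = x ∨ c = y)}

open Classical in
/-- `K_{m,x}`: the intermediate field of `F/K` generated by the x-coordinates of all `m`-torsion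
points of the curve `W`. -/
noncomputable def torsionXField (K : Type*) {F : Type*} [Field K] [Field F] [Algebra K F]
    (W : WeierstrassCurve.Affine F) (m : ℕ) : IntermediateField K F :=
  IntermediateField.adjoin K
    {c | ∃ (y : F) (h : W.Nonsingular c y),
      m • (WeierstrassCurve.Affine.Point.some _ _ h : WeierstrassCurve.Affine.Point W) = 0}

open Classical in
/-- `P, Q` form a `ℤ/mℤ`-basis of the `m`-torsion subgroup `E[m]`. -/
def IsTorsionBasis {F : Type*} [Field F] {W : WeierstrassCurve.Affine F}
    (m : ℕ) (P Q : WeierstrassCurve.Affine.Point W) : Prop :=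
  m • P = 0 ∧ m • Q = 0 ∧
  (∀ R : WeierstrassCurve.Affine.Point W, m • R = 0 → ∃ a b : ℤ, R = a • P + b • Q) ∧
  (∀ a b : ℤ, a • P + b • Q = 0 → (m : ℤ) ∣ a ∧ (m : ℤ) ∣ b)

/-- The coordinatewise Galois action: the automorphism `σ` sends the point `P` to the point
`Q`. -/
def galSends {K F : Type*} [Field K] [Field F] [Algebra K F] {W : WeierstrassCurve.Affine F}
    (σ : F ≃ₐ[K] F) (P Q : WeierstrassCurve.Affine.Point W) : Prop :=
  (P = 0 ∧ Q = 0) ∨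
  (∃ (x y x' y' : F) (h : W.Nonsingular x y) (h' : W.Nonsingular x' y'),
    P = WeierstrassCurve.Affine.Point.some _ _ h ∧ Q = WeierstrassCurve.Affine.Point.some _ _ h' ∧
    σ x = x' ∧ σ y = y')

open WeierstrassCurve.Affine

section Aux
open Classical
variable {K F : Type*} [Field K] [Field F] [Algebra K F] {A B : K}

lemma baseW_equation {x y : F} (h : (baseW K F A B).Nonsingular x y) :
    y ^ 2 = x ^ 3 + algebraMap K F A * x + algebraMap K F B := by
  have := h.1
  rw [WeierstrassCurve.Affine.equation_iff] at this
  simpa [baseW] using this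

lemma baseW_negY (x y : F) : (baseW K F A B).negY x y = -y := by
  simp [baseW, WeierstrassCurve.Affine.negY]

lemma baseW_addX {x1 y1 x2 y2 x3 y3 : F} {h1 : (baseW K F A B).Nonsingular x1 y1}
    {h2 : (baseW K F A B).Nonsingular x2 y2} {h3 : (baseW K F A B).Nonsingular x3 y3}
    (hx : x1 ≠ x2)
    (hadd : Point.some _ _ h1 + Point.some _ _ h2 = Point.some _ _ h3) :
    x3 = ((y1 - y2) / (x1 - x2)) ^ 2 - x1 - x2 := by
  rw [Point.add_of_X_ne hx] at hadd
  injection hadd.symm with hx3 hy3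
  rw [hx3]
  simp [WeierstrassCurve.Affine.addX, slope_of_X_ne hx, baseW]

lemma baseW_subX {x1 y1 x2 y2 x4 y4 : F} {h1 : (baseW K F A B).Nonsingular x1 y1}
    {h2 : (baseW K F A B).Nonsingular x2 y2} {h4 : (baseW K F A B).Nonsingular x4 y4}
    (hx : x1 ≠ x2)
    (hsub : Point.some _ _ h1 - Point.some _ _ h2 = Point.some _ _ h4) :
    x4 = ((y1 + y2) / (x1 - x2)) ^ 2 - x1 - x2 := by
  rw [sub_eq_add_neg, Point.neg_some, Point.add_of_X_ne hx] at hsub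
  injection hsub.symm with hx4 hy4
  rw [hx4]
  rw [slope_of_X_ne hx]
  simp [WeierstrassCurve.Affine.addX, baseW, WeierstrassCurve.Affine.negY]

lemma baseW_x_ne {x1 y1 x2 y2 x3 y3 x4 y4 : F} {h1 : (baseW K F A B).Nonsingular x1 y1}
    {h2 : (baseW K F A B).Nonsingular x2 y2} {h3 : (baseW K F A B).Nonsingular x3 y3}
    {h4 : (baseW K F A B).Nonsingular x4 y4}
    (hadd : Point.some _ _ h1 + Point.some _ _ h2 = Point.some _ _ h3)
    (hsub : Point.some _ _ h1 - Point.some _ _ h2 = Point.some _ _ h4) : x1 ≠ x2 := by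
  intro hx
  have e1 := baseW_equation h1
  have e2 := baseW_equation h2
  subst hx
  have hy : (y1 - y2) * (y1 + y2) = 0 := by linear_combination e1 - e2
  rcases mul_eq_zero.mp hy with hy | hy
  · have hy : y1 = y2 := sub_eq_zero.mp hy
    subst hy
    rw [sub_self] at hsub
    exact Point.some_ne_zero h4 hsub.symm
  · have hy : y1 = (baseW K F A B).negY x1 y2 := by
      rw [baseW_negY]; exact eq_neg_of_add_eq_zero_left hy
    rw [Point.add_of_Y_eq rfl hy] at hadd
    exact Point.some_ne_zero h3 hadd.symm

end Aux

open Classical in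
/-- With `P₃ = P₁ + P₂ = (x₃, y₃)` and `P₄ = P₁ − P₂ = (x₄, y₄)`, one has
`K(x₁, x₂, y₁y₂) = K(x₁, x₂, x₃, x₄)` and `K_m = K_{m,x}(y₁)`. -/
theorem stmt1 (K : Type*) [Field K] (hchar2 : (2 : K) ≠ 0) (hchar3 : (3 : K) ≠ 0)
    (Kbar : Type*) [Field Kbar] [Algebra K Kbar] [IsAlgClosure K Kbar]
    (A B : K) (hΔ : 4 * A ^ 3 + 27 * B ^ 2 ≠ 0)
    (m : ℕ) (hm : 2 ≤ m) (hmchar : (m : K) ≠ 0)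
    (x1 y1 x2 y2 : Kbar)
    (h1 : (baseW K Kbar A B).Nonsingular x1 y1)
    (h2 : (baseW K Kbar A B).Nonsingular x2 y2)
    (hbasis : IsTorsionBasis m (WeierstrassCurve.Affine.Point.some _ _ h1)
      (WeierstrassCurve.Affine.Point.some _ _ h2))
    (ζ : Kbar) (hζ : IsPrimitiveRoot ζ m)
    (x3 y3 x4 y4 : Kbar)
    (h3 : (baseW K Kbar A B).Nonsingular x3 y3)
    (h4 : (baseW K Kbar A B).Nonsingular x4 y4)
    (hadd : WeierstrassCurve.Affine.Point.some _ _ h1 + WeierstrassCurve.Affine.Point.some _ _ h2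
      = WeierstrassCurve.Affine.Point.some _ _ h3)
    (hsub : WeierstrassCurve.Affine.Point.some _ _ h1 - WeierstrassCurve.Affine.Point.some _ _ h2
      = WeierstrassCurve.Affine.Point.some _ _ h4) :
    IntermediateField.adjoin K {x1, x2, y1 * y2}
        = IntermediateField.adjoin K {x1, x2, x3, x4} ∧
      torsionField K (baseW K Kbar A B) m
        = torsionXField K (baseW K Kbar A B) m ⊔ IntermediateField.adjoin K {y1} := by
  have h2F : (2 : Kbar) ≠ 0 := fun h => hchar2 <| (algebraMap K Kbar).injective <| by
    rw [map_ofNat, h, map_zero]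
  have h4F : (4 : Kbar) ≠ 0 := by
    have : (4 : Kbar) = 2 * 2 := by norm_num
    rw [this]; exact mul_ne_zero h2F h2F
  have hx12 : x1 ≠ x2 := baseW_x_ne hadd hsub
  have hd : x1 - x2 ≠ 0 := sub_ne_zero.mpr hx12
  have e1 := baseW_equation h1
  have e2 := baseW_equation h2
  have hx3 : x3 = ((y1 - y2) / (x1 - x2)) ^ 2 - x1 - x2 := baseW_addX hx12 hadd
  have hx4 : x4 = ((y1 + y2) / (x1 - x2)) ^ 2 - x1 - x2 := baseW_subX hx12 hsub
  set A' := algebraMap K Kbar A with hA'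
  set B' := algebraMap K Kbar B with hB'
  constructor
  · -- part 1
    apply le_antisymm
    · rw [IntermediateField.adjoin_le_iff]
      rintro c (rfl | rfl | rfl)
      · exact IntermediateField.subset_adjoin K _ (by simp)
      · exact IntermediateField.subset_adjoin K _ (by simp)
      · -- y1 * y2 ∈ adjoin {x1, x2, x3, x4}
        have key : y1 * y2 = (x4 - x3) * (x1 - x2) ^ 2 / 4 := by
          rw [hx3, hx4]
          field_simp
          ring
        rw [key]
        set S := IntermediateField.adjoin K ({x1, x2, x3, x4} : Set Kbar)
        have m1 : x1 ∈ S := IntermediateField.subset_adjoin K _ (by simp)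
        have m2 : x2 ∈ S := IntermediateField.subset_adjoin K _ (by simp)
        have m3 : x3 ∈ S := IntermediateField.subset_adjoin K _ (by simp)
        have m4 : x4 ∈ S := IntermediateField.subset_adjoin K _ (by simp)
        have m5 : (4 : Kbar) ∈ S := by
          have := S.natCast_mem 4
          simpa using this
        exact div_mem (mul_mem (sub_mem m4 m3) (pow_mem (sub_mem m1 m2) 2)) m5
    · rw [IntermediateField.adjoin_le_iff]
      set S := IntermediateField.adjoin K ({x1, x2, y1 * y2} : Set Kbar)
      have m1 : x1 ∈ S := IntermediateField.subset_adjoin K _ (by simp)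
      have m2 : x2 ∈ S := IntermediateField.subset_adjoin K _ (by simp)
      have mp : y1 * y2 ∈ S := IntermediateField.subset_adjoin K _ (by simp)
      have mA : A' ∈ S := S.algebraMap_mem A
      have mB : B' ∈ S := S.algebraMap_mem B
      have m2' : (2 : Kbar) ∈ S := by
        have := S.natCast_mem 2
        simpa using this
      have cube1 : x1 ^ 3 + A' * x1 + B' ∈ S :=
        add_mem (add_mem (pow_mem m1 3) (mul_mem mA m1)) mB
      have cube2 : x2 ^ 3 + A' * x2 + B' ∈ S :=
        add_mem (add_mem (pow_mem m2 3) (mul_mem mA m2)) mB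
      have sq1 : (y1 - y2) ^ 2 = (x1 ^ 3 + A' * x1 + B') + (x2 ^ 3 + A' * x2 + B')
          - 2 * (y1 * y2) := by linear_combination e1 + e2
      have sq2 : (y1 + y2) ^ 2 = (x1 ^ 3 + A' * x1 + B') + (x2 ^ 3 + A' * x2 + B')
          + 2 * (y1 * y2) := by linear_combination e1 + e2
      have hx3' : x3 = ((x1 ^ 3 + A' * x1 + B') + (x2 ^ 3 + A' * x2 + B') - 2 * (y1 * y2))
          / (x1 - x2) ^ 2 - x1 - x2 := by
        rw [hx3, div_pow, sq1]
      have hx4' : x4 = ((x1 ^ 3 + A' * x1 + B') + (x2 ^ 3 + A' * x2 + B') + 2 * (y1 * y2))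
          / (x1 - x2) ^ 2 - x1 - x2 := by
        rw [hx4, div_pow, sq2]
      rintro c (rfl | rfl | rfl | rfl)
      · exact m1
      · exact m2
      · rw [hx3']
        exact sub_mem (sub_mem (div_mem (sub_mem (add_mem cube1 cube2) (mul_mem m2' mp))
          (pow_mem (sub_mem m1 m2) 2)) m1) m2
      · rw [hx4']
        exact sub_mem (sub_mem (div_mem (add_mem (add_mem cube1 cube2) (mul_mem m2' mp))
          (pow_mem (sub_mem m1 m2) 2)) m1) m2
  · -- part 2
    have hy1M : y1 ∈ torsionXField K (baseW K Kbar A B) m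
        ⊔ IntermediateField.adjoin K ({y1} : Set Kbar) :=
      le_sup_right (α := IntermediateField K Kbar) <|
        IntermediateField.subset_adjoin K _ (by simp)
    have hxmem : ∀ (x y : Kbar) (h : (baseW K Kbar A B).Nonsingular x y),
        m • (Point.some _ _ h : Point (baseW K Kbar A B)) = 0 →
        x ∈ torsionXField K (baseW K Kbar A B) m := by
      intro x y h hsm
      exact IntermediateField.subset_adjoin K _ ⟨y, h, hsm⟩
    have hx1L : x1 ∈ torsionXField K (baseW K Kbar A B) m := hxmem x1 y1 h1 hbasis.1
    apply le_antisymm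
    · rw [torsionField, IntermediateField.adjoin_le_iff]
      rintro c ⟨x, y, h, hsm, hc | hc⟩
      · rw [hc]
        exact le_sup_left (α := IntermediateField K Kbar) (hxmem x y h hsm)
      · rw [hc]
        by_cases hy1 : y1 = 0
        · -- then m = 2 and all torsion y-coordinates vanish
          have hP1P1 : (Point.some _ _ h1 : Point (baseW K Kbar A B)) + Point.some _ _ h1 = 0 := by
            apply Point.add_of_Y_eq rfl
            rw [baseW_negY, hy1, neg_zero]
          have hm2 : m = 2 := by
            have h20 : (2 : ℤ) • (Point.some _ _ h1 : Point (baseW K Kbar A B))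
                + (0 : ℤ) • (Point.some _ _ h2 : Point (baseW K Kbar A B)) = 0 := by
              rw [zero_smul, add_zero, two_zsmul, hP1P1]
            have := (hbasis.2.2.2 2 0 h20).1
            have hle : (m : ℤ) ≤ 2 := Int.le_of_dvd (by norm_num) this
            omega
          subst hm2
          have hPP : (Point.some _ _ h : Point (baseW K Kbar A B)) + Point.some _ _ h = 0 := by
            rw [← two_nsmul]; exact hsm
          by_cases hyneg : y = (baseW K Kbar A B).negY x y
          · have h2y : 2 * y = 0 := by
              rw [baseW_negY] at hyneg
              linear_combination hyneg
            have hy0 : y = 0 := by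
              simpa [mul_eq_zero, h2F] using h2y
            rw [hy0]; exact zero_mem _
          · rw [Point.add_self_of_Y_ne hyneg] at hPP
            exact absurd hPP (Point.some_ne_zero _)
        · -- y1 ≠ 0
          by_cases hxx1 : x = x1
          · -- y = ± y1
            have e := baseW_equation h
            rw [hxx1] at e
            have hfac : (y - y1) * (y + y1) = 0 := by linear_combination e - e1
            rcases mul_eq_zero.mp hfac with h' | h'
            · rw [sub_eq_zero.mp h']; exact hy1M
            · rw [eq_neg_of_add_eq_zero_left h']; exact neg_mem hy1M
          · -- generic case
            have hQ0 : (Point.some _ _ h : Point (baseW K Kbar A B)) + Point.some _ _ h1 ≠ 0 := by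
              intro h0
              have heq := eq_neg_of_add_eq_zero_left h0
              rw [Point.neg_some] at heq
              injection heq with hx' hy'
              exact hxx1 hx'
            rcases hQ : (Point.some _ _ h : Point (baseW K Kbar A B)) + Point.some _ _ h1 with
              _ | ⟨x', y', h'⟩
            · exact absurd hQ hQ0
            · have hsm' : m • (Point.some _ _ h' : Point (baseW K Kbar A B)) = 0 := by
                rw [← hQ, smul_add, hsm, hbasis.1, add_zero]
              have hx'L : x' ∈ torsionXField K (baseW K Kbar A B) m := hxmem x' y' h' hsm'
              have hxL : x ∈ torsionXField K (baseW K Kbar A B) m := hxmem x y h hsm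
              rw [Point.add_of_X_ne hxx1] at hQ
              injection hQ with hx'e hy'e
              have hx'eq : x' = ((y - y1) / (x - x1)) ^ 2 - x - x1 := by
                rw [← hx'e, slope_of_X_ne hxx1]
                show _ ^ 2 + _ - _ - _ - _ = _
                simp [baseW]
              have e := baseW_equation h
              have hdx : x - x1 ≠ 0 := sub_ne_zero.mpr hxx1
              have hsq : (y - y1) ^ 2 = (x' + x + x1) * (x - x1) ^ 2 := by
                rw [hx'eq]
                field_simp
                ring
              have hyy1 : y * y1 = ((x ^ 3 + A' * x + B') + (x1 ^ 3 + A' * x1 + B')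
                  - (x' + x + x1) * (x - x1) ^ 2) / 2 := by
                rw [eq_div_iff h2F]
                linear_combination e + e1 - hsq
              have mA : A' ∈ torsionXField K (baseW K Kbar A B) m :=
                (torsionXField K (baseW K Kbar A B) m).algebraMap_mem A
              have mB : B' ∈ torsionXField K (baseW K Kbar A B) m :=
                (torsionXField K (baseW K Kbar A B) m).algebraMap_mem B
              have m2' : (2 : Kbar) ∈ torsionXField K (baseW K Kbar A B) m := by
                have := (torsionXField K (baseW K Kbar A B) m).natCast_mem 2
                simpa using this
              have hyy1L : y * y1 ∈ torsionXField K (baseW K Kbar A B) m := by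
                rw [hyy1]
                exact div_mem (sub_mem (add_mem
                  (add_mem (add_mem (pow_mem hxL 3) (mul_mem mA hxL)) mB)
                  (add_mem (add_mem (pow_mem hx1L 3) (mul_mem mA hx1L)) mB))
                  (mul_mem (add_mem (add_mem hx'L hxL) hx1L) (pow_mem (sub_mem hxL hx1L) 2))) m2'
              have hy1sqL : y1 ^ 2 ∈ torsionXField K (baseW K Kbar A B) m := by
                rw [e1]
                exact add_mem (add_mem (pow_mem hx1L 3) (mul_mem mA hx1L)) mB
              have hyeq : y = (y * y1) / y1 ^ 2 * y1 := by
                field_simp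
              rw [hyeq]
              exact mul_mem (le_sup_left (α := IntermediateField K Kbar)
                (div_mem hyy1L hy1sqL)) hy1M
    · apply sup_le
      · show IntermediateField.adjoin K _ ≤ _
        rw [IntermediateField.adjoin_le_iff]
        rintro c ⟨y, h, hsm⟩
        exact IntermediateField.subset_adjoin K _ ⟨c, y, h, hsm, Or.inl rfl⟩
      · rw [IntermediateField.adjoin_le_iff]
        rintro c hc
        rw [Set.mem_singleton_iff] at hc
        rw [hc]
        exact IntermediateField.subset_adjoin K _ ⟨x1, y1, h1, hbasis.1, Or.inr rfl⟩
end

section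
/- Let L := K(x1, x2). Then exactly one of the following four cases holds: (1) [K_m : L] = 1; (2) [K_m : L] = 2 and L(y1·y2) = K_m; (3) [K_m : L] = 2, y1·y2 ∈ L, and L(y1) = L(y2) = K_m; (4) [K_m : L] = 4 and [L(y1·y2) : L] = 2. -/
open WeierstrassCurve.Affine IntermediateField Polynomial
open Classical

namespace Stmt2Aux

variable {K Kbar : Type*} [Field K] [Field Kbar] [Algebra K Kbar] {A B : K}
variable {M : IntermediateField K Kbar}

lemma negY_eq (x y : Kbar) : (baseW K Kbar A B).negY x y = -y := by
  simp [WeierstrassCurve.Affine.negY, baseW]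

lemma negY_mem {x y : Kbar} (hx : x ∈ M) (hy : y ∈ M) :
    (baseW K Kbar A B).negY x y ∈ M := by
  rw [negY_eq]; exact neg_mem hy

lemma slope_mem {x₁ x₂ y₁ y₂ : Kbar} (h₁ : x₁ ∈ M) (h₂ : x₂ ∈ M) (h₃ : y₁ ∈ M)
    (h₄ : y₂ ∈ M) : (baseW K Kbar A B).slope x₁ x₂ y₁ y₂ ∈ M := by
  have h3 : (3 : Kbar) ∈ M := by exact_mod_cast M.natCast_mem 3
  have h2' : (2 : Kbar) ∈ M := by exact_mod_cast M.natCast_mem 2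
  have hA : (baseW K Kbar A B).a₄ ∈ M := M.algebraMap_mem A
  rw [WeierstrassCurve.Affine.slope]
  split_ifs with hx hy
  · exact zero_mem M
  · refine div_mem ?_ (sub_mem h₃ (negY_mem h₁ h₃))
    refine sub_mem (add_mem (add_mem (mul_mem h3 (pow_mem h₁ 2)) ?_) hA) ?_
    · exact mul_mem (mul_mem h2' (zero_mem M)) h₁
    · exact mul_mem (zero_mem M) h₃
  · exact div_mem (sub_mem h₃ h₄) (sub_mem h₁ h₂)

lemma addX_mem {x₁ x₂ l : Kbar} (h₁ : x₁ ∈ M) (h₂ : x₂ ∈ M) (hl : l ∈ M) :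
    (baseW K Kbar A B).addX x₁ x₂ l ∈ M := by
  refine sub_mem (sub_mem (sub_mem (add_mem (pow_mem hl 2) ?_) ?_) h₁) h₂
  · exact mul_mem (zero_mem M) hl
  · exact zero_mem M

lemma negAddY_mem {x₁ x₂ y₁ l : Kbar} (h₁ : x₁ ∈ M) (h₂ : x₂ ∈ M) (h₃ : y₁ ∈ M)
    (hl : l ∈ M) : (baseW K Kbar A B).negAddY x₁ x₂ y₁ l ∈ M :=
  add_mem (mul_mem hl (sub_mem (addX_mem h₁ h₂ hl) h₁)) h₃

lemma addY_mem {x₁ x₂ y₁ l : Kbar} (h₁ : x₁ ∈ M) (h₂ : x₂ ∈ M) (h₃ : y₁ ∈ M)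
    (hl : l ∈ M) : (baseW K Kbar A B).addY x₁ x₂ y₁ l ∈ M :=
  negY_mem (addX_mem h₁ h₂ hl) (negAddY_mem h₁ h₂ h₃ hl)

/-- The predicate that the coordinates of a point lie in `M`. -/
def ptIn (M : IntermediateField K Kbar) {W : WeierstrassCurve.Affine Kbar} :
    WeierstrassCurve.Affine.Point W → Prop
  | .zero => True
  | .some (x := x) (y := y) _ => x ∈ M ∧ y ∈ M

variable (A B) in
/-- Points with coordinates in `M` form a subgroup. -/
def ptSubgroup (M : IntermediateField K Kbar) :
    AddSubgroup (WeierstrassCurve.Affine.Point (baseW K Kbar A B)) where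
  carrier := {P | ptIn M P}
  zero_mem' := trivial
  neg_mem' := by
    rintro (_ | @⟨x, y, h⟩) hP
    · exact hP
    · exact ⟨hP.1, negY_mem hP.1 hP.2⟩
  add_mem' := by
    rintro (_ | @⟨x₁, y₁, hh₁⟩) (_ | @⟨x₂, y₂, hh₂⟩) hP hQ
    · exact trivial
    · exact hQ
    · exact hP
    · simp only [Set.mem_setOf_eq] at hP hQ ⊢
      by_cases hxy : x₁ = x₂ ∧ y₁ = (baseW K Kbar A B).negY x₂ y₂
      · rw [WeierstrassCurve.Affine.Point.add_of_Y_eq hxy.1 hxy.2]; trivial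
      · rw [WeierstrassCurve.Affine.Point.add_some hxy]
        have hl := slope_mem hP.1 hQ.1 hP.2 hQ.2 (A := A) (B := B)
        exact ⟨addX_mem hP.1 hQ.1 hl, addY_mem hP.1 hQ.1 hP.2 hl⟩

lemma sq_eq {x y : Kbar} (h : (baseW K Kbar A B).Equation x y) :
    y ^ 2 = x ^ 3 + algebraMap K Kbar A * x + algebraMap K Kbar B := by
  rw [WeierstrassCurve.Affine.equation_iff] at h
  simpa [baseW] using h

lemma sq_mem {x y : Kbar} (h : (baseW K Kbar A B).Equation x y) (hx : x ∈ M) :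
    y ^ 2 ∈ M := by
  rw [sq_eq h]
  exact add_mem (add_mem (pow_mem hx 3) (mul_mem (M.algebraMap_mem A) hx))
    (M.algebraMap_mem B)

lemma isIntegral_of_sq {E : IntermediateField K Kbar} {t : Kbar} (ht2 : t ^ 2 ∈ E) :
    IsIntegral E t := by
  refine ⟨X ^ 2 - C ⟨t ^ 2, ht2⟩, monic_X_pow_sub_C _ two_ne_zero, ?_⟩
  simp [sub_eq_zero]

lemma aeval_quad {E : IntermediateField K Kbar} {t : Kbar} (ht2 : t ^ 2 ∈ E) :
    Polynomial.aeval t (X ^ 2 - C (⟨t ^ 2, ht2⟩ : E)) = 0 := by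
  simp [sub_eq_zero]

lemma minpoly_natDegree_two {E : IntermediateField K Kbar} {t : Kbar} (ht2 : t ^ 2 ∈ E)
    (ht : t ∉ E) : (minpoly E t).natDegree = 2 := by
  have hint := isIntegral_of_sq ht2
  have hqm : (X ^ 2 - C (⟨t ^ 2, ht2⟩ : E)).Monic := monic_X_pow_sub_C _ two_ne_zero
  have hdvd := minpoly.dvd E t (aeval_quad ht2)
  have hle : (minpoly E t).natDegree ≤ 2 := by
    have := natDegree_le_of_dvd hdvd hqm.ne_zero
    simpa [natDegree_X_pow_sub_C] using this
  have hge : 2 ≤ (minpoly E t).natDegree := by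
    rw [minpoly.two_le_natDegree_iff hint]
    rintro ⟨⟨u, hu⟩, rfl⟩
    exact ht hu
  omega

lemma extendScalars_sup_adjoin {E : IntermediateField K Kbar} {t : Kbar}
    (h : E ≤ E ⊔ IntermediateField.adjoin K {t}) :
    extendScalars h = IntermediateField.adjoin E {t} := by
  apply restrictScalars_injective K
  rw [extendScalars_restrictScalars, restrictScalars_adjoin_eq_sup]

lemma relfinrank_sup_adjoin_of_sq {E : IntermediateField K Kbar} {t : Kbar}
    (ht2 : t ^ 2 ∈ E) (ht : t ∉ E) :
    relfinrank E (E ⊔ IntermediateField.adjoin K {t}) = 2 := by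
  have h : E ≤ E ⊔ IntermediateField.adjoin K {t} := le_sup_left
  rw [relfinrank_eq_finrank_of_le h, extendScalars_sup_adjoin h,
    IntermediateField.adjoin.finrank (isIntegral_of_sq ht2), minpoly_natDegree_two ht2 ht]

lemma sup_adjoin_eq_self {E : IntermediateField K Kbar} {t : Kbar} (ht : t ∈ E) :
    E ⊔ IntermediateField.adjoin K {t} = E :=
  sup_eq_left.mpr (adjoin_le_iff.mpr (Set.singleton_subset_iff.mpr ht))

set_option maxHeartbeats 800000 in
set_option synthInstance.maxHeartbeats 200000 in
lemma rep_of_mem_sup_adjoin {E : IntermediateField K Kbar} {t u : Kbar} (ht2 : t ^ 2 ∈ E)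
    (hu : u ∈ E ⊔ IntermediateField.adjoin K {t}) :
    ∃ a b : Kbar, a ∈ E ∧ b ∈ E ∧ u = a + b * t := by
  have hu' : u ∈ IntermediateField.adjoin E {t} := by
    rw [← restrictScalars_adjoin_eq_sup] at hu; exact hu
  have hint := isIntegral_of_sq ht2
  rw [← IntermediateField.mem_toSubalgebra,
    IntermediateField.adjoin_simple_toSubalgebra_of_isAlgebraic hint.isAlgebraic,
    Algebra.adjoin_singleton_eq_range_aeval] at hu'
  obtain ⟨p, hp⟩ := hu'
  set q : Polynomial E := X ^ 2 - C ⟨t ^ 2, ht2⟩ with hq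
  have hqm : q.Monic := monic_X_pow_sub_C _ two_ne_zero
  have hmod : Polynomial.aeval t (p %ₘ q) = u := by
    have := congrArg (Polynomial.aeval t) (modByMonic_add_div p q)
    rw [map_add, map_mul, hq, aeval_quad ht2, zero_mul, add_zero] at this
    rw [this]; exact hp
  have hdeg : (p %ₘ q).degree < 2 := by
    have := degree_modByMonic_lt p hqm
    rwa [hq, degree_X_pow_sub_C two_pos] at this
  have hrep := eq_X_add_C_of_degree_le_one (Order.le_of_lt_succ (by exact_mod_cast hdeg))
  refine ⟨((p %ₘ q).coeff 0 : Kbar), ((p %ₘ q).coeff 1 : Kbar),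
    ((p %ₘ q).coeff 0).2, ((p %ₘ q).coeff 1).2, ?_⟩
  rw [← hmod]
  conv_lhs => rw [hrep]
  rw [map_add, map_mul, aeval_X, aeval_C, aeval_C]
  rw [add_comm]
  rfl

lemma torsionField_le {m : ℕ} {x1 y1 x2 y2 : Kbar}
    (h1 : (baseW K Kbar A B).Nonsingular x1 y1)
    (h2 : (baseW K Kbar A B).Nonsingular x2 y2)
    (hbasis : IsTorsionBasis m (WeierstrassCurve.Affine.Point.some _ _ h1)
      (WeierstrassCurve.Affine.Point.some _ _ h2))
    (hx1 : x1 ∈ M) (hy1 : y1 ∈ M) (hx2 : x2 ∈ M) (hy2 : y2 ∈ M) :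
    torsionField K (baseW K Kbar A B) m ≤ M := by
  rw [torsionField, adjoin_le_iff]
  rintro c ⟨x, y, h, hmt, hc⟩
  obtain ⟨a, b, hab⟩ := hbasis.2.2.1 _ hmt
  have hp1 : (WeierstrassCurve.Affine.Point.some _ _ h1) ∈ ptSubgroup A B M :=
    show x1 ∈ M ∧ y1 ∈ M from ⟨hx1, hy1⟩
  have hp2 : (WeierstrassCurve.Affine.Point.some _ _ h2) ∈ ptSubgroup A B M :=
    show x2 ∈ M ∧ y2 ∈ M from ⟨hx2, hy2⟩
  have hmem : (WeierstrassCurve.Affine.Point.some _ _ h) ∈ ptSubgroup A B M := by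
    rw [hab]
    exact AddSubgroup.add_mem _ (AddSubgroup.zsmul_mem _ hp1 a)
      (AddSubgroup.zsmul_mem _ hp2 b)
  have hmem' : x ∈ M ∧ y ∈ M := hmem
  rcases hc with rfl | rfl
  · exact hmem'.1
  · exact hmem'.2

lemma some_add_self_eq_zero_of_y_eq_zero {x y : Kbar}
    (h : (baseW K Kbar A B).Nonsingular x y) (h0 : y = 0) :
    WeierstrassCurve.Affine.Point.some _ _ h + WeierstrassCurve.Affine.Point.some _ _ h = 0 :=
  WeierstrassCurve.Affine.Point.add_self_of_Y_eq (by rw [negY_eq, h0, neg_zero])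

lemma y_eq_zero_of_some_add_self_eq_zero {x y : Kbar} (h2K : (2 : Kbar) ≠ 0)
    {h : (baseW K Kbar A B).Nonsingular x y}
    (ht : WeierstrassCurve.Affine.Point.some _ _ h + WeierstrassCurve.Affine.Point.some _ _ h = 0) :
    y = 0 := by
  by_cases hy : y = (baseW K Kbar A B).negY x y
  · rw [negY_eq] at hy
    have h2y : 2 * y = 0 := by rw [two_mul, eq_neg_iff_add_eq_zero.mp hy]
    rcases mul_eq_zero.mp h2y with h' | h'
    · exact absurd h' h2K
    · exact h'
  · rw [WeierstrassCurve.Affine.Point.add_some (fun h' => hy h'.2)] at ht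
    exact absurd ht (WeierstrassCurve.Affine.Point.some_ne_zero _)

end Stmt2Aux

set_option maxHeartbeats 1000000 in
/-- With `L := K(x₁, x₂)`, exactly one of the four listed cases holds. -/
theorem stmt2 (K : Type*) [Field K] (hchar2 : (2 : K) ≠ 0) (hchar3 : (3 : K) ≠ 0)
    (Kbar : Type*) [Field Kbar] [Algebra K Kbar] [IsAlgClosure K Kbar]
    (A B : K) (hΔ : 4 * A ^ 3 + 27 * B ^ 2 ≠ 0)
    (m : ℕ) (hm : 2 ≤ m) (hmchar : (m : K) ≠ 0)
    (x1 y1 x2 y2 : Kbar)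
    (h1 : (baseW K Kbar A B).Nonsingular x1 y1)
    (h2 : (baseW K Kbar A B).Nonsingular x2 y2)
    (hbasis : IsTorsionBasis m (WeierstrassCurve.Affine.Point.some _ _ h1)
      (WeierstrassCurve.Affine.Point.some _ _ h2))
    (ζ : Kbar) (hζ : IsPrimitiveRoot ζ m) :
    let L : IntermediateField K Kbar := IntermediateField.adjoin K {x1, x2}
    let Km : IntermediateField K Kbar := torsionField K (baseW K Kbar A B) m
    let c1 : Prop := IntermediateField.relfinrank L Km = 1
    let c2 : Prop := IntermediateField.relfinrank L Km = 2 ∧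
      L ⊔ IntermediateField.adjoin K {y1 * y2} = Km
    let c3 : Prop := IntermediateField.relfinrank L Km = 2 ∧ y1 * y2 ∈ L ∧
      L ⊔ IntermediateField.adjoin K {y1} = Km ∧ L ⊔ IntermediateField.adjoin K {y2} = Km
    let c4 : Prop := IntermediateField.relfinrank L Km = 4 ∧
      IntermediateField.relfinrank L (L ⊔ IntermediateField.adjoin K {y1 * y2}) = 2
    (c1 ∧ ¬c2 ∧ ¬c3 ∧ ¬c4) ∨ (¬c1 ∧ c2 ∧ ¬c3 ∧ ¬c4) ∨
      (¬c1 ∧ ¬c2 ∧ c3 ∧ ¬c4) ∨ (¬c1 ∧ ¬c2 ∧ ¬c3 ∧ c4) := by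
  intro L Km c1 c2 c3 c4
  have h2K : (2 : Kbar) ≠ 0 := by
    rw [show (2 : Kbar) = algebraMap K Kbar 2 by rw [map_ofNat]]
    exact (_root_.map_ne_zero _).mpr hchar2
  have h2L : (2 : Kbar) ∈ L := by exact_mod_cast L.natCast_mem 2
  have hx1L : x1 ∈ L := subset_adjoin K _ (Set.mem_insert _ _)
  have hx2L : x2 ∈ L := subset_adjoin K _ (Set.mem_insert_of_mem _ rfl)
  have hy1sq : y1 ^ 2 ∈ L := Stmt2Aux.sq_mem h1.1 hx1L
  have hy2sq : y2 ^ 2 ∈ L := Stmt2Aux.sq_mem h2.1 hx2L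
  have hysq : (y1 * y2) ^ 2 ∈ L := by rw [mul_pow]; exact mul_mem hy1sq hy2sq
  have hx1Km : x1 ∈ Km := subset_adjoin K _ ⟨x1, y1, h1, hbasis.1, Or.inl rfl⟩
  have hy1Km : y1 ∈ Km := subset_adjoin K _ ⟨x1, y1, h1, hbasis.1, Or.inr rfl⟩
  have hx2Km : x2 ∈ Km := subset_adjoin K _ ⟨x2, y2, h2, hbasis.2.1, Or.inl rfl⟩
  have hy2Km : y2 ∈ Km := subset_adjoin K _ ⟨x2, y2, h2, hbasis.2.1, Or.inr rfl⟩
  have hLKm : L ≤ Km := adjoin_le_iff.mpr (by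
    rintro c hc
    rcases hc with rfl | rfl
    exacts [hx1Km, hx2Km])
  have hKm : Km = L ⊔ IntermediateField.adjoin K {y1} ⊔ IntermediateField.adjoin K {y2} := by
    apply le_antisymm
    · refine Stmt2Aux.torsionField_le h1 h2 hbasis ?_ ?_ ?_ ?_
      · exact (le_trans le_sup_left le_sup_left :
          L ≤ L ⊔ IntermediateField.adjoin K {y1} ⊔ IntermediateField.adjoin K {y2}) hx1L
      · exact (le_trans le_sup_right le_sup_left :
          IntermediateField.adjoin K {y1} ≤ _ ⊔ IntermediateField.adjoin K {y2})
          (subset_adjoin K _ rfl)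
      · exact (le_trans le_sup_left le_sup_left :
          L ≤ L ⊔ IntermediateField.adjoin K {y1} ⊔ IntermediateField.adjoin K {y2}) hx2L
      · exact (le_sup_right :
          IntermediateField.adjoin K {y2} ≤ L ⊔ IntermediateField.adjoin K {y1} ⊔ _)
          (subset_adjoin K _ rfl)
    · exact sup_le (sup_le hLKm (adjoin_le_iff.mpr (Set.singleton_subset_iff.mpr hy1Km)))
        (adjoin_le_iff.mpr (Set.singleton_subset_iff.mpr hy2Km))
  have hm2y : ∀ {x y : Kbar} (h : (baseW K Kbar A B).Nonsingular x y), m = 2 →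
      m • (WeierstrassCurve.Affine.Point.some _ _ h : WeierstrassCurve.Affine.Point
        (baseW K Kbar A B)) = 0 → y = 0 := by
    intro x y h hm2 hsm
    apply Stmt2Aux.y_eq_zero_of_some_add_self_eq_zero h2K (h := h)
    rw [hm2, two_nsmul] at hsm
    exact hsm
  have hm2 : y1 = 0 ∨ y2 = 0 → m = 2 := by
    rintro (h0 | h0)
    · have hP : WeierstrassCurve.Affine.Point.some _ _ h1 + WeierstrassCurve.Affine.Point.some _ _ h1
          = 0 := Stmt2Aux.some_add_self_eq_zero_of_y_eq_zero h1 h0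
      have h20 : (2 : ℤ) • WeierstrassCurve.Affine.Point.some _ _ h1 +
          (0 : ℤ) • WeierstrassCurve.Affine.Point.some _ _ h2 = 0 := by
        rw [two_zsmul, zero_zsmul, add_zero]; exact hP
      have hdvd := (hbasis.2.2.2 2 0 h20).1
      have := Int.le_of_dvd two_pos hdvd
      omega
    · have hP : WeierstrassCurve.Affine.Point.some _ _ h2 + WeierstrassCurve.Affine.Point.some _ _ h2
          = 0 := Stmt2Aux.some_add_self_eq_zero_of_y_eq_zero h2 h0
      have h20 : (0 : ℤ) • WeierstrassCurve.Affine.Point.some _ _ h1 +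
          (2 : ℤ) • WeierstrassCurve.Affine.Point.some _ _ h2 = 0 := by
        rw [two_zsmul, zero_zsmul, zero_add]; exact hP
      have hdvd := (hbasis.2.2.2 0 2 h20).2
      have := Int.le_of_dvd two_pos hdvd
      omega
  have hbothzero : y1 = 0 → y2 = 0 := fun h0 => hm2y h2 (hm2 (Or.inl h0)) hbasis.2.1
  have hbothzero' : y2 = 0 → y1 = 0 := fun h0 => hm2y h1 (hm2 (Or.inr h0)) hbasis.1
  by_cases hy1 : y1 ∈ L <;> by_cases hy2 : y2 ∈ L
  · -- Case 1 : y1 ∈ L, y2 ∈ L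
    have hKmL : Km = L := by
      rw [hKm, Stmt2Aux.sup_adjoin_eq_self hy1, Stmt2Aux.sup_adjoin_eq_self hy2]
    have hr : relfinrank L Km = 1 := by rw [hKmL]; exact relfinrank_self L
    refine Or.inl ⟨hr, ?_, ?_, ?_⟩
    · intro h'
      have h'' : relfinrank L Km = 2 := h'.1
      omega
    · intro h'
      have h'' : relfinrank L Km = 2 := h'.1
      omega
    · intro h'
      have h'' : relfinrank L Km = 4 := h'.1
      omega
  · -- Case 2 : y1 ∈ L, y2 ∉ L
    have hKmE : Km = L ⊔ IntermediateField.adjoin K {y2} := by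
      rw [hKm, Stmt2Aux.sup_adjoin_eq_self hy1]
    have hr : relfinrank L Km = 2 := by
      rw [hKmE]; exact Stmt2Aux.relfinrank_sup_adjoin_of_sq hy2sq hy2
    have hy1ne : y1 ≠ 0 := fun h0 => hy2 (by rw [hbothzero h0]; exact zero_mem L)
    have hPL : y1 * y2 ∉ L := by
      intro hmem
      apply hy2
      have hmem' := mul_mem (inv_mem hy1) hmem
      rwa [inv_mul_cancel_left₀ hy1ne] at hmem'
    have hsup : L ⊔ IntermediateField.adjoin K {y1 * y2} = Km := by
      rw [hKmE]
      apply le_antisymm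
      · refine sup_le le_sup_left (adjoin_le_iff.mpr (Set.singleton_subset_iff.mpr ?_))
        exact mul_mem ((le_sup_left : L ≤ _ ⊔ IntermediateField.adjoin K {y2}) hy1)
          ((le_sup_right : IntermediateField.adjoin K {y2} ≤ L ⊔ _) (subset_adjoin K _ rfl))
      · refine sup_le le_sup_left (adjoin_le_iff.mpr (Set.singleton_subset_iff.mpr ?_))
        have hmem' := mul_mem (inv_mem ((le_sup_left :
            L ≤ _ ⊔ IntermediateField.adjoin K {y1 * y2}) hy1))
          ((le_sup_right : IntermediateField.adjoin K {y1 * y2} ≤ L ⊔ _)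
            (subset_adjoin K _ rfl))
        rwa [inv_mul_cancel_left₀ hy1ne] at hmem'
    refine Or.inr (Or.inl ⟨?_, ⟨hr, hsup⟩, ?_, ?_⟩)
    · intro h'
      have h'' : relfinrank L Km = 1 := h'
      omega
    · intro h'
      exact hPL h'.2.1
    · intro h'
      have h'' : relfinrank L Km = 4 := h'.1
      omega
  · -- Case 3 : y1 ∉ L, y2 ∈ L
    have hy2' : y2 ∈ L ⊔ IntermediateField.adjoin K {y1} :=
      (le_sup_left : L ≤ _ ⊔ IntermediateField.adjoin K {y1}) hy2
    have hKmE : Km = L ⊔ IntermediateField.adjoin K {y1} := by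
      rw [hKm, Stmt2Aux.sup_adjoin_eq_self hy2']
    have hr : relfinrank L Km = 2 := by
      rw [hKmE]; exact Stmt2Aux.relfinrank_sup_adjoin_of_sq hy1sq hy1
    have hy2ne : y2 ≠ 0 := fun h0 => hy1 (by rw [hbothzero' h0]; exact zero_mem L)
    have hPL : y1 * y2 ∉ L := by
      intro hmem
      apply hy1
      have hmem' := mul_mem (inv_mem hy2) hmem
      rwa [mul_comm y1 y2, inv_mul_cancel_left₀ hy2ne] at hmem'
    have hsup : L ⊔ IntermediateField.adjoin K {y1 * y2} = Km := by
      rw [hKmE]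
      apply le_antisymm
      · refine sup_le le_sup_left (adjoin_le_iff.mpr (Set.singleton_subset_iff.mpr ?_))
        exact mul_mem ((le_sup_right : IntermediateField.adjoin K {y1} ≤ L ⊔ _)
            (subset_adjoin K _ rfl))
          ((le_sup_left : L ≤ _ ⊔ IntermediateField.adjoin K {y1}) hy2)
      · refine sup_le le_sup_left (adjoin_le_iff.mpr (Set.singleton_subset_iff.mpr ?_))
        have hmem' := mul_mem (inv_mem ((le_sup_left :
            L ≤ _ ⊔ IntermediateField.adjoin K {y1 * y2}) hy2))
          ((le_sup_right : IntermediateField.adjoin K {y1 * y2} ≤ L ⊔ _)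
            (subset_adjoin K _ rfl))
        have hc : y2⁻¹ * (y1 * y2) = y1 := by
          rw [mul_comm y1 y2, inv_mul_cancel_left₀ hy2ne]
        rwa [hc] at hmem'
    refine Or.inr (Or.inl ⟨?_, ⟨hr, hsup⟩, ?_, ?_⟩)
    · intro h'
      have h'' : relfinrank L Km = 1 := h'
      omega
    · intro h'
      exact hPL h'.2.1
    · intro h'
      have h'' : relfinrank L Km = 4 := h'.1
      omega
  · -- Case 4 : y1 ∉ L, y2 ∉ L
    have hy1ne : y1 ≠ 0 := fun h0 => hy1 (by rw [h0]; exact zero_mem L)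
    have hy2ne : y2 ≠ 0 := fun h0 => hy2 (by rw [h0]; exact zero_mem L)
    have hrE1 : relfinrank L (L ⊔ IntermediateField.adjoin K {y1}) = 2 :=
      Stmt2Aux.relfinrank_sup_adjoin_of_sq hy1sq hy1
    by_cases hP : y1 * y2 ∈ L
    · -- case (3) of the statement
      have hy2E1 : y2 ∈ L ⊔ IntermediateField.adjoin K {y1} := by
        have hmem' := mul_mem
          (inv_mem ((le_sup_right : IntermediateField.adjoin K {y1} ≤ L ⊔ _)
            (subset_adjoin K _ rfl)))
          ((le_sup_left : L ≤ _ ⊔ IntermediateField.adjoin K {y1}) hP)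
        rwa [inv_mul_cancel_left₀ hy1ne] at hmem'
      have hKmE : Km = L ⊔ IntermediateField.adjoin K {y1} := by
        rw [hKm, Stmt2Aux.sup_adjoin_eq_self hy2E1]
      have hr : relfinrank L Km = 2 := by rw [hKmE]; exact hrE1
      have hE2 : L ⊔ IntermediateField.adjoin K {y2} = Km := by
        apply le_antisymm
        · exact sup_le hLKm (adjoin_le_iff.mpr (Set.singleton_subset_iff.mpr hy2Km))
        · rw [hKmE]
          refine sup_le le_sup_left (adjoin_le_iff.mpr (Set.singleton_subset_iff.mpr ?_))
          have hmem' := mul_mem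
            (inv_mem ((le_sup_right : IntermediateField.adjoin K {y2} ≤ L ⊔ _)
              (subset_adjoin K _ rfl)))
            ((le_sup_left : L ≤ _ ⊔ IntermediateField.adjoin K {y2}) hP)
          rwa [mul_comm y1 y2, inv_mul_cancel_left₀ hy2ne] at hmem'
      have hE1 : L ⊔ IntermediateField.adjoin K {y1} = Km := hKmE.symm
      have hLne : L ≠ Km := by
        intro h
        have h'' : relfinrank L Km = 1 := by rw [← h]; exact relfinrank_self L
        omega
      refine Or.inr (Or.inr (Or.inl ⟨?_, ?_, ⟨hr, hP, hE1, hE2⟩, ?_⟩))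
      · intro h'
        have h'' : relfinrank L Km = 1 := h'
        omega
      · intro h'
        have hsup : L ⊔ IntermediateField.adjoin K {y1 * y2} = Km := h'.2
        apply hLne
        rw [← hsup, Stmt2Aux.sup_adjoin_eq_self hP]
      · intro h'
        have h'' : relfinrank L Km = 4 := h'.1
        omega
    · -- case (4) of the statement
      have hy2E1 : y2 ∉ L ⊔ IntermediateField.adjoin K {y1} := by
        intro hmem
        obtain ⟨a, b, ha, hb, hab⟩ := Stmt2Aux.rep_of_mem_sup_adjoin hy1sq hmem
        have hmem2 : 2 * a * b * y1 ∈ L := by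
          have hcalc : 2 * a * b * y1 = y2 ^ 2 - a ^ 2 - b ^ 2 * y1 ^ 2 := by rw [hab]; ring
          rw [hcalc]
          exact sub_mem (sub_mem hy2sq (pow_mem ha 2)) (mul_mem (pow_mem hb 2) hy1sq)
        by_cases hb0 : b = 0
        · exact hy2 (by rw [hab, hb0, zero_mul, add_zero]; exact ha)
        by_cases ha0 : a = 0
        · apply hP
          have hcalc : y1 * y2 = b * y1 ^ 2 := by rw [hab, ha0]; ring
          rw [hcalc]; exact mul_mem hb hy1sq
        · apply hy1
          have h2ab : 2 * a * b ≠ 0 := mul_ne_zero (mul_ne_zero h2K ha0) hb0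
          have hmem' := mul_mem (inv_mem (mul_mem (mul_mem h2L ha) hb)) hmem2
          rwa [inv_mul_cancel_left₀ h2ab] at hmem'
      have hE1Km : relfinrank (L ⊔ IntermediateField.adjoin K {y1}) Km = 2 := by
        rw [hKm]
        exact Stmt2Aux.relfinrank_sup_adjoin_of_sq
          ((le_sup_left : L ≤ _ ⊔ IntermediateField.adjoin K {y1}) hy2sq) hy2E1
      have hE1le : (L ⊔ IntermediateField.adjoin K {y1}) ≤ Km := by
        rw [hKm]; exact le_sup_left
      have hLE1 : L ≤ L ⊔ IntermediateField.adjoin K {y1} := le_sup_left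
      have hr : relfinrank L Km = 4 := by
        rw [← relfinrank_mul_relfinrank hLE1 hE1le, hrE1, hE1Km]
      have hr2 : relfinrank L (L ⊔ IntermediateField.adjoin K {y1 * y2}) = 2 :=
        Stmt2Aux.relfinrank_sup_adjoin_of_sq hysq hP
      refine Or.inr (Or.inr (Or.inr ⟨?_, ?_, ?_, ⟨hr, hr2⟩⟩))
      · intro h'
        have h'' : relfinrank L Km = 1 := h'
        omega
      · intro h'
        have h'' : relfinrank L Km = 2 := h'.1
        omega
      · intro h'
        have h'' : relfinrank L Km = 2 := h'.1
        omega
end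

section
/- Let d ∈ {3, 4} and suppose d divides m. Let {Q1, Q2} be a ℤ/dℤ-basis of the d-torsion subgroup E[d]. Then K_m is the compositum of K_{m,x} and K(y(Q1), y(Q2)), where y(·) denotes the y-coordinate of a point. -/
open Classical in
open WeierstrassCurve WeierstrassCurve.Affine Polynomial IntermediateField in
theorem aux_y_mem {K Kbar : Type*} [Field K] [Field Kbar] [Algebra K Kbar] [IsAlgClosure K Kbar]
    (W0 : WeierstrassCurve.Affine K) (ha1 : W0.a₁ = 0) (ha3 : W0.a₃ = 0)
    (h2K : (2 : K) ≠ 0)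
    (m d : ℕ) (hd : d = 3 ∨ d = 4) (hdm : d ∣ m)
    {xQ1 yQ1 xQ2 yQ2 : Kbar}
    (hQ1 : (W0.baseChange Kbar).toAffine.Nonsingular xQ1 yQ1)
    (hQ2 : (W0.baseChange Kbar).toAffine.Nonsingular xQ2 yQ2)
    (hQbasis : IsTorsionBasis d (WeierstrassCurve.Affine.Point.some _ _ hQ1)
      (WeierstrassCurve.Affine.Point.some _ _ hQ2))
    {x y : Kbar} (h : (W0.baseChange Kbar).toAffine.Nonsingular x y)
    (htor : m • (WeierstrassCurve.Affine.Point.some _ _ h :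
      WeierstrassCurve.Affine.Point (W0.baseChange Kbar).toAffine) = 0) :
    y ∈ torsionXField K (W0.baseChange Kbar).toAffine m ⊔
      IntermediateField.adjoin K {yQ1, yQ2} := by
  classical
  have halgcl : IsAlgClosed Kbar := IsAlgClosure.isAlgClosed K
  set L : IntermediateField K Kbar :=
    torsionXField K (W0.baseChange Kbar).toAffine m ⊔ IntermediateField.adjoin K {yQ1, yQ2}
    with hLdef
  -- coefficients of the base-changed curve
  have hba1 : (W0.baseChange Kbar).a₁ = 0 := by
    simp [WeierstrassCurve.baseChange, ha1]
  have hba3 : (W0.baseChange Kbar).a₃ = 0 := by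
    simp [WeierstrassCurve.baseChange, ha3]
  have two_ne : (2 : Kbar) ≠ 0 := by
    intro hcon
    apply h2K
    apply (algebraMap K Kbar).injective
    rw [map_ofNat, map_zero]
    exact hcon
  -- membership of x-coordinates of torsion points in L
  have hxmem : ∀ {x' y' : Kbar} (h' : (W0.baseChange Kbar).toAffine.Nonsingular x' y'),
      m • (WeierstrassCurve.Affine.Point.some _ _ h' :
        WeierstrassCurve.Affine.Point (W0.baseChange Kbar).toAffine) = 0 → x' ∈ L := by
    intro x' y' h' ht
    have hx' : x' ∈ torsionXField K (W0.baseChange Kbar).toAffine m := by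
      rw [torsionXField]
      exact IntermediateField.subset_adjoin K _ ⟨y', h', ht⟩
    exact SetLike.le_def.mp le_sup_left hx'
  have hyQ1 : yQ1 ∈ L :=
    SetLike.le_def.mp le_sup_right (IntermediateField.subset_adjoin K _ (Set.mem_insert _ _))
  -- y² in terms of x
  have hysq : ∀ {x' y' : Kbar}, (W0.baseChange Kbar).toAffine.Nonsingular x' y' →
      y' ^ 2 = x' ^ 3 + (W0.baseChange Kbar).a₂ * x' ^ 2 + (W0.baseChange Kbar).a₄ * x'
        + (W0.baseChange Kbar).a₆ := by
    intro x' y' h'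
    have e := ((W0.baseChange Kbar).toAffine.equation_iff x' y').mp h'.1
    rw [hba1, hba3] at e
    linear_combination e
  -- Q1 is m-torsion
  have hQ1tor : m • (WeierstrassCurve.Affine.Point.some _ _ hQ1 :
      WeierstrassCurve.Affine.Point (W0.baseChange Kbar).toAffine) = 0 := by
    obtain ⟨k, rfl⟩ := hdm
    rw [mul_comm, mul_smul, hQbasis.1, smul_zero]
  -- 2 • Q1 ≠ 0
  have h2Q1 : (WeierstrassCurve.Affine.Point.some _ _ hQ1 :
      WeierstrassCurve.Affine.Point (W0.baseChange Kbar).toAffine)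
        + WeierstrassCurve.Affine.Point.some _ _ hQ1 ≠ 0 := by
    intro hcon
    have hz : (2 : ℤ) • (WeierstrassCurve.Affine.Point.some _ _ hQ1 :
        WeierstrassCurve.Affine.Point (W0.baseChange Kbar).toAffine)
          + (0 : ℤ) • WeierstrassCurve.Affine.Point.some _ _ hQ2 = 0 := by
      rw [two_zsmul, zero_zsmul, add_zero]; exact hcon
    have := (hQbasis.2.2.2 2 0 hz).1
    rcases hd with rfl | rfl <;> norm_num at this
  -- the key Galois-action lemma
  have key : ∀ (τ : Kbar →ₐ[K] Kbar), (∀ z ∈ L, τ z = z) → τ y = y := by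
    intro τ hfix
    have sign : ∀ (P : WeierstrassCurve.Affine.Point (W0.baseChange Kbar).toAffine),
        m • P = 0 → Point.map (W' := W0) τ P = P ∨ Point.map (W' := W0) τ P = -P := by
      rintro (_ | @⟨xP, yP, hP⟩) htP
      · left; rfl
      · have hxP : τ xP = xP := hfix _ (hxmem hP htP)
        have hyP2 : (τ yP) ^ 2 = yP ^ 2 := by
          have e := hysq hP
          have e2 : (τ yP) ^ 2 = τ xP ^ 3 + (W0.baseChange Kbar).a₂ * τ xP ^ 2
              + (W0.baseChange Kbar).a₄ * τ xP + (W0.baseChange Kbar).a₆ := by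
            have := congrArg τ e
            simpa [map_add, map_mul, map_pow, WeierstrassCurve.baseChange,
              AlgHom.commutes] using this
          rw [e2, hxP, ← e]
        have hfac : (τ yP - yP) * (τ yP + yP) = 0 := by linear_combination hyP2
        rcases mul_eq_zero.mp hfac with hc | hc
        · left
          rw [Point.map_some]
          simp only [Point.some.injEq]
          exact ⟨hxP, sub_eq_zero.mp hc⟩
        · right
          rw [Point.map_some, WeierstrassCurve.Affine.Point.neg_some]
          simp only [Point.some.injEq]
          refine ⟨hxP, ?_⟩
          simp only [WeierstrassCurve.Affine.negY, hba1, hba3]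
          linear_combination hc
    have hπQ1 : Point.map (W' := W0) τ (WeierstrassCurve.Affine.Point.some _ _ hQ1) =
        WeierstrassCurve.Affine.Point.some _ _ hQ1 := by
      rw [Point.map_some]
      simp only [Point.some.injEq]
      exact ⟨hfix _ (hxmem hQ1 hQ1tor), hfix _ hyQ1⟩
    have fixall : ∀ (P : WeierstrassCurve.Affine.Point (W0.baseChange Kbar).toAffine),
        m • P = 0 → Point.map (W' := W0) τ P = P := by
      intro P htP
      rcases sign P htP with hp | hp
      · exact hp
      · have htPQ : m • (P + WeierstrassCurve.Affine.Point.some _ _ hQ1) = 0 := by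
          rw [smul_add, htP, hQ1tor, add_zero]
        have hmap : Point.map (W' := W0) τ (P + WeierstrassCurve.Affine.Point.some _ _ hQ1)
            = -P + WeierstrassCurve.Affine.Point.some _ _ hQ1 := by
          rw [map_add, hp, hπQ1]
        rcases sign _ htPQ with h' | h'
        · have hPP : -P = P := by
            have := hmap.symm.trans h'
            exact add_right_cancel this
          rw [hp, hPP]
        · exfalso
          apply h2Q1
          have hc := hmap.symm.trans h'
          have h0 : (WeierstrassCurve.Affine.Point.some _ _ hQ1 :
              WeierstrassCurve.Affine.Point (W0.baseChange Kbar).toAffine)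
                + WeierstrassCurve.Affine.Point.some _ _ hQ1
              = (-P + WeierstrassCurve.Affine.Point.some _ _ hQ1)
                + (P + WeierstrassCurve.Affine.Point.some _ _ hQ1) := by abel
          rw [h0, hc]
          exact neg_add_cancel _
      -- done
    have := fixall (WeierstrassCurve.Affine.Point.some _ _ h) htor
    rw [Point.map_some] at this
    simp only [Point.some.injEq] at this
    exact this.2
  -- now show y ∈ L
  by_cases hy0 : y = 0
  · rw [hy0]; exact zero_mem L
  by_contra hyL
  have hxL : x ∈ L := hxmem h htor
  have hy2L : y ^ 2 ∈ L := by
    rw [hysq h]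
    refine add_mem (add_mem (add_mem (pow_mem hxL 3) ?_) ?_) ?_
    · exact mul_mem (L.algebraMap_mem W0.a₂) (pow_mem hxL 2)
    · exact mul_mem (L.algebraMap_mem W0.a₄) hxL
    · exact L.algebraMap_mem W0.a₆
  have : Algebra.IsAlgebraic (↥L) Kbar := Algebra.IsAlgebraic.tower_top (K := K) ↥L
  set c : ↥L := ⟨y ^ 2, hy2L⟩ with hcdef
  have hcy : (algebraMap (↥L) Kbar) c = y ^ 2 := rfl
  have hminp : minpoly (↥L) y = X ^ 2 - C c := by
    refine (minpoly.eq_of_irreducible_of_monic ?_ ?_ ?_).symm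
    · refine X_pow_sub_C_irreducible_of_prime Nat.prime_two ?_
      intro b hb
      apply hyL
      have hb' : (algebraMap (↥L) Kbar b) ^ 2 = y ^ 2 := by
        rw [← map_pow, hb, hcy]
      have hfac : (y - algebraMap (↥L) Kbar b) * (y + algebraMap (↥L) Kbar b) = 0 := by
        linear_combination - hb'
      rcases mul_eq_zero.mp hfac with hcc | hcc
      · rw [sub_eq_zero.mp hcc]
        exact b.2
      · have : y = -(algebraMap (↥L) Kbar b) := by linear_combination hcc
        rw [this]
        exact neg_mem b.2
    · simp [hcy]
    · exact monic_X_pow_sub_C c (by norm_num)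
  have hroot : aeval (-y) (minpoly (↥L) y) = 0 := by
    rw [hminp]
    simp [hcy]
  obtain ⟨τ, hτy⟩ := IntermediateField.exists_algHom_of_splits_of_aeval
    (fun s => ⟨(Algebra.IsAlgebraic.isAlgebraic s).isIntegral,
      IsAlgClosed.splits _⟩) hroot
  have hτfix : ∀ z ∈ L, (τ.restrictScalars K) z = z := by
    intro z hz
    have := τ.commutes ⟨z, hz⟩
    simpa using this
  have hfixy := key (τ.restrictScalars K) hτfix
  have hτy' : τ y = y := hfixy
  rw [hτy] at hτy'
  have h2y : (2 : Kbar) * y = 0 := by linear_combination - hτy'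
  rcases mul_eq_zero.mp h2y with hc | hc
  · exact two_ne hc
  · exact hy0 hc

/-- If `d ∈ {3, 4}` divides `m` and `{Q₁, Q₂}` is a `ℤ/dℤ`-basis of
`E[d]`, then `K_m` is the compositum of `K_{m,x}` and `K(y(Q₁), y(Q₂))`. -/
theorem stmt14 (K : Type*) [Field K] (hchar2 : (2 : K) ≠ 0) (hchar3 : (3 : K) ≠ 0)
    (Kbar : Type*) [Field Kbar] [Algebra K Kbar] [IsAlgClosure K Kbar]
    (A B : K) (hΔ : 4 * A ^ 3 + 27 * B ^ 2 ≠ 0)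
    (m : ℕ) (hm : 2 ≤ m) (hmchar : (m : K) ≠ 0)
    (x1 y1 x2 y2 : Kbar)
    (h1 : (baseW K Kbar A B).Nonsingular x1 y1)
    (h2 : (baseW K Kbar A B).Nonsingular x2 y2)
    (hbasis : IsTorsionBasis m (WeierstrassCurve.Affine.Point.some _ _ h1)
      (WeierstrassCurve.Affine.Point.some _ _ h2))
    (ζ : Kbar) (hζ : IsPrimitiveRoot ζ m)
    (d : ℕ) (hd : d = 3 ∨ d = 4) (hdm : d ∣ m)
    (xQ1 yQ1 xQ2 yQ2 : Kbar)
    (hQ1 : (baseW K Kbar A B).Nonsingular xQ1 yQ1)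
    (hQ2 : (baseW K Kbar A B).Nonsingular xQ2 yQ2)
    (hQbasis : IsTorsionBasis d (WeierstrassCurve.Affine.Point.some _ _ hQ1)
      (WeierstrassCurve.Affine.Point.some _ _ hQ2)) :
    torsionField K (baseW K Kbar A B) m
      = torsionXField K (baseW K Kbar A B) m ⊔ IntermediateField.adjoin K {yQ1, yQ2} := by
  classical
  have hW : baseW K Kbar A B =
      (({ a₁ := 0, a₂ := 0, a₃ := 0, a₄ := A, a₆ := B } :
        WeierstrassCurve.Affine K).baseChange Kbar) := by
    ext <;> simp [baseW]
  clear hbasis hζ h1 h2 hΔ hchar3 hm hmchar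
  revert hQ1 hQ2
  rw [hW]
  intro hQ1 hQ2 hQbasis
  let W0 : WeierstrassCurve.Affine K := { a₁ := 0, a₂ := 0, a₃ := 0, a₄ := A, a₆ := B }
  have hQ1tor : m • (WeierstrassCurve.Affine.Point.some _ _ hQ1 :
      WeierstrassCurve.Affine.Point (W0.baseChange Kbar).toAffine) = 0 := by
    obtain ⟨k, rfl⟩ := hdm
    rw [mul_comm, mul_smul, hQbasis.1, smul_zero]
  have hQ2tor : m • (WeierstrassCurve.Affine.Point.some _ _ hQ2 :
      WeierstrassCurve.Affine.Point (W0.baseChange Kbar).toAffine) = 0 := by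
    obtain ⟨k, rfl⟩ := hdm
    rw [mul_comm, mul_smul, hQbasis.2.1, smul_zero]
  apply le_antisymm
  · rw [torsionField, IntermediateField.adjoin_le_iff]
    rintro c ⟨x, y, h, htor, rfl | rfl⟩
    · have hx : c ∈ torsionXField K (W0.baseChange Kbar).toAffine m := by
        rw [torsionXField]
        exact IntermediateField.subset_adjoin K _ ⟨y, h, htor⟩
      exact SetLike.le_def.mp le_sup_left hx
    · exact aux_y_mem W0 rfl rfl hchar2 m d hd hdm hQ1 hQ2 hQbasis h htor
  · apply sup_le
    · rw [torsionXField, torsionField, IntermediateField.adjoin_le_iff]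
      rintro c ⟨y, h, htor⟩
      exact IntermediateField.subset_adjoin K _ ⟨c, y, h, htor, Or.inl rfl⟩
    · rw [torsionField, IntermediateField.adjoin_le_iff]
      rintro c (rfl | rfl)
      · exact IntermediateField.subset_adjoin K _ ⟨xQ1, c, hQ1, hQ1tor, Or.inr rfl⟩
      · exact IntermediateField.subset_adjoin K _ ⟨xQ2, c, hQ2, hQ2tor, Or.inr rfl⟩
end
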